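/- For integers k ≥ r ≥ 1, n ≥ 0, and l ≥ 1, the second orthogonality relation ∑_j (-1)^j · S1(j,n) · S2(k,j) = (-1)^n · δ_{n,k} holds, where the sum is over all j with r ≤ j ≤ k; moreover the sum is 0 when n < r. -/

import Mathlib

/-- The `(l,r)`-Stirling numbers of the first kind. -/
def S1 (l r : ℕ) : ℕ → ℕ → ℕ
  | n, k =>
    if _h1 : n < r then 0
    else if _h2 : n = r then (if k = r then 1 else 0)
    else S1 l r (n - 1) (k - 1) + (n - 1) ^ l * S1 l r (n - 1) k
termination_by n _ => n
decreasing_by all_goals omega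

/-- The `(l,r)`-Stirling numbers of the second kind. -/
def S2 (l r : ℕ) : ℕ → ℕ → ℕ
  | n, k =>
    if _h1 : n < r then 0
    else if _h2 : n = r then (if k = r then 1 else 0)
    else S2 l r (n - 1) (k - 1) + k ^ l * S2 l r (n - 1) k
termination_by n _ => n
decreasing_by all_goals omega

lemma S1_base (l r n : ℕ) : S1 l r r n = if n = r then 1 else 0 := by
  rw [S1]; simp

lemma S2_base (l r n : ℕ) : S2 l r r n = if n = r then 1 else 0 := by
  rw [S2]; simp

lemma S1_rec (l r j n : ℕ) (hj : r ≤ j) :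
    S1 l r (j + 1) n = S1 l r j (n - 1) + j ^ l * S1 l r j n := by
  rw [S1, dif_neg (by omega), dif_neg (by omega)]
  simp

lemma S2_rec (l r k j : ℕ) (hk : r ≤ k) :
    S2 l r (k + 1) j = S2 l r k (j - 1) + j ^ l * S2 l r k j := by
  rw [S2, dif_neg (by omega), dif_neg (by omega)]
  simp

lemma S2_gt (l r : ℕ) : ∀ n j, n < j → S2 l r n j = 0 := by
  intro n
  induction n using Nat.strong_induction_on with
  | _ n ih =>
    intro j hj
    rw [S2]
    split
    · rfl
    split
    · rw [if_neg (by omega)]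
    · rw [ih (n - 1) (by omega) (j - 1) (by omega), ih (n - 1) (by omega) j (by omega)]
      ring

lemma S2_lt (l r : ℕ) (hr : 1 ≤ r) : ∀ n j, j < r → S2 l r n j = 0 := by
  intro n
  induction n using Nat.strong_induction_on with
  | _ n ih =>
    intro j hj
    rw [S2]
    split
    · rfl
    split
    · rw [if_neg (by omega)]
    · rw [ih (n - 1) (by omega) (j - 1) (by omega), ih (n - 1) (by omega) j (by omega)]
      ring

theorem stmt7 (l r n k : ℕ) (hr : 1 ≤ r) (hk : r ≤ k) (hl : 1 ≤ l) :
    ∑ j ∈ Finset.Icc r k, (-1 : ℤ) ^ j * (S1 l r j n : ℤ) * (S2 l r k j : ℤ) =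
      (-1 : ℤ) ^ n * (if n = k then 1 else 0) := by
  induction k, hk using Nat.le_induction generalizing n with
  | base =>
    rw [Finset.Icc_self, Finset.sum_singleton, S1_base, S2_base]
    by_cases h : n = r <;> simp [h]
  | succ k hk ih =>
    have hrec : ∀ j ∈ Finset.Icc r (k + 1),
        (-1 : ℤ) ^ j * (S1 l r j n : ℤ) * (S2 l r (k + 1) j : ℤ)
          = (-1 : ℤ) ^ j * (S1 l r j n : ℤ) * (S2 l r k (j - 1) : ℤ)
            + (-1 : ℤ) ^ j * (j : ℤ) ^ l * (S1 l r j n : ℤ) * (S2 l r k j : ℤ) := by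
      intro j hj
      rw [S2_rec l r k j hk]
      push_cast
      ring
    rw [Finset.sum_congr rfl hrec, Finset.sum_add_distrib]
    have hB : ∑ j ∈ Finset.Icc r (k + 1),
        (-1 : ℤ) ^ j * (j : ℤ) ^ l * (S1 l r j n : ℤ) * (S2 l r k j : ℤ)
          = ∑ j ∈ Finset.Icc r k,
            (-1 : ℤ) ^ j * (j : ℤ) ^ l * (S1 l r j n : ℤ) * (S2 l r k j : ℤ) := by
      rw [Finset.sum_Icc_succ_top (by omega : r ≤ k + 1),
        S2_gt l r k (k + 1) (by omega)]
      simp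
    have hA : ∑ j ∈ Finset.Icc r (k + 1),
        (-1 : ℤ) ^ j * (S1 l r j n : ℤ) * (S2 l r k (j - 1) : ℤ)
          = ∑ j ∈ Finset.Icc r k,
            (-((-1 : ℤ) ^ j * (S1 l r j (n - 1) : ℤ) * (S2 l r k j : ℤ))
              - (-1 : ℤ) ^ j * (j : ℤ) ^ l * (S1 l r j n : ℤ) * (S2 l r k j : ℤ)) := by
      have hsplit : Finset.Icc r (k + 1) = insert r (Finset.Icc (r + 1) (k + 1)) := by
        ext x
        simp only [Finset.mem_Icc, Finset.mem_insert]
        omega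
      rw [hsplit, Finset.sum_insert (by simp), S2_lt l r hr k (r - 1) (by omega)]
      rw [← Finset.map_add_right_Icc r k 1, Finset.sum_map]
      simp only [addRightEmbedding_apply, Nat.cast_zero, mul_zero, zero_add,
        Nat.add_sub_cancel]
      refine Finset.sum_congr rfl fun j hj => ?_
      rw [S1_rec l r j n (Finset.mem_Icc.mp hj).1]
      push_cast
      ring
    rw [hA, hB, Finset.sum_sub_distrib, Finset.sum_neg_distrib]
    rw [ih (n - 1)]
    rcases n with _ | m
    · have h1 : ¬ (0 - 1 = k) := by omega
      have h2 : ¬ (0 = k + 1) := by omega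
      simp [h1, h2]
      omega
    · have h1 : m + 1 - 1 = m := rfl
      by_cases hc : m = k
      · have h2 : m + 1 = k + 1 := by omega
        simp [h1, hc, h2, pow_succ]
      · have h2 : ¬ (m + 1 = k + 1) := by omega
        simp [h1, hc, h2]
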